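/- For every n ≥ 1, in MvPolynomial (Fin n) (ZMod 2) one has the Moore permanent formula (Q_0 ∘ Q_1 ∘ ⋯ ∘ Q_{n-2}) (∏_{j : Fin n} X j) = ∑_{π ∈ Equiv.Perm (Fin n)} ∏_{i : Fin n} (X (π i)) ^ (2 ^ (i : ℕ)), where the composite has n − 1 factors (and is the identity when n = 1). (This computes the polynomial realization of the element ω = Q₀⋯Q_{n−2} ι_n of the paper's Lemma 2, corresponding to u ∧ u² ∧ ⋯ ∧ u^{2^{n-1}} in Λⁿ(F(1)).) -/

import Mathlib

open MvPolynomial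

/-- The `i`-th Milnor derivation `Q_i` on `𝔽₂[x_j : j ∈ σ]`: the unique
`𝔽₂`-linear derivation with `Q_i (X j) = (X j) ^ (2 ^ (i + 1))`. -/
noncomputable def Q (σ : Type*) (i : ℕ) :
    MvPolynomial σ (ZMod 2) →ₗ[ZMod 2] MvPolynomial σ (ZMod 2) :=
  (MvPolynomial.mkDerivation (ZMod 2)
    fun j => (MvPolynomial.X j : MvPolynomial σ (ZMod 2)) ^ (2 ^ (i + 1))).toLinearMap

open Finset

lemma Q_X (σ : Type*) (i : ℕ) (j : σ) :
    Q σ i (X j) = (X j : MvPolynomial σ (ZMod 2)) ^ (2 ^ (i + 1)) := by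
  simp [Q]

lemma Q_sq (σ : Type*) (i : ℕ) (p : MvPolynomial σ (ZMod 2)) :
    Q σ i (p ^ 2) = 0 := by
  show (MvPolynomial.mkDerivation (ZMod 2) _) (p^2) = 0
  rw [Derivation.leibniz_pow, two_nsmul]
  exact CharTwo.add_self_eq_zero _

lemma Q_mul (σ : Type*) (i : ℕ) (p q : MvPolynomial σ (ZMod 2)) :
    Q σ i (p * q) = p * Q σ i q + q * Q σ i p := by
  show (MvPolynomial.mkDerivation (ZMod 2) _) (p*q) = _
  rw [Derivation.leibniz]
  rfl

lemma Q_prod_X {n : ℕ} (i : ℕ) (s : Finset (Fin n)) :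
    Q (Fin n) i (∏ j ∈ s, X j) =
      ∑ j ∈ s, (X j : MvPolynomial (Fin n) (ZMod 2)) ^ (2 ^ (i + 1)) * ∏ k ∈ s.erase j, X k := by
  induction s using Finset.induction_on with
  | empty => simp [show Q (Fin n) i 1 = 0 from Derivation.map_one_eq_zero _]
  | @insert a s hj ih =>
    rw [Finset.prod_insert hj, Q_mul, ih, Q_X, Finset.sum_insert hj, Finset.erase_insert hj,
      Finset.mul_sum, add_comm]
    congr 1
    · ring
    · refine Finset.sum_congr rfl fun j hjs => ?_
      rw [Finset.erase_insert_of_ne (by rintro rfl; exact hj hjs),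
        Finset.prod_insert (fun h => hj (Finset.erase_subset _ _ h))]
      ring

lemma image_cons_univ {n r : ℕ} (j : Fin n) (f : Fin r → Fin n) :
    Finset.image (Fin.cons j f : Fin (r+1) → Fin n) Finset.univ
      = insert j (Finset.image f Finset.univ) := by
  ext a
  simp only [Finset.mem_image, Finset.mem_insert, Finset.mem_univ, true_and, Fin.exists_fin_succ, Fin.cons_zero, Fin.cons_succ]
  tauto

lemma main (n c : ℕ) : ∀ r : ℕ,
    ((List.ofFn fun k : Fin r => Q (Fin n) (c + k)).foldr (· ∘ₗ ·) LinearMap.id)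
        (∏ j : Fin n, X j)
      = ∑ f : Fin r → Fin n, if Function.Injective f then
          (∏ i : Fin r, (X (f i) : MvPolynomial (Fin n) (ZMod 2)) ^ (2 ^ (c + 1 + i))) *
            ∏ j ∈ (Finset.image f Finset.univ)ᶜ, X j
        else 0 := by
  intro r
  induction r generalizing c with
  | zero =>
    simp only [List.ofFn_zero, List.foldr_nil, LinearMap.id_apply]
    rw [Fintype.sum_eq_single (default : Fin 0 → Fin n) (fun f hf => absurd (Subsingleton.elim f default) hf)]
    rw [if_pos (Function.injective_of_subsingleton _)]
    simp
  | succ r ih =>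
    rw [List.ofFn_succ, List.foldr_cons]
    have hfn : (List.ofFn fun k : Fin r => Q (Fin n) (c + ↑(Fin.succ k)))
        = List.ofFn fun k : Fin r => Q (Fin n) ((c + 1) + ↑k) := by
      refine congrArg List.ofFn (funext fun k => ?_)
      rw [Fin.val_succ, show c + (↑k + 1) = c + 1 + ↑k by omega]
    simp only [Fin.val_zero, Nat.add_zero]
    rw [hfn, LinearMap.comp_apply, ih (c + 1), map_sum]
    rw [← Equiv.sum_comp (Fin.consEquiv (fun _ : Fin (r+1) => Fin n))]
    simp only [show ⇑(Fin.consEquiv fun _ : Fin (r+1) => Fin n) = fun p => Fin.cons p.1 p.2 from rfl]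
    rw [Fintype.sum_prod_type]
    rw [Finset.sum_comm]
    dsimp only
    refine Finset.sum_congr rfl fun f _ => ?_
    by_cases hf : Function.Injective f
    · rw [if_pos hf]
      have hsq : (∏ i : Fin r, (X (f i) : MvPolynomial (Fin n) (ZMod 2)) ^ (2 ^ (c + 1 + 1 + ↑i)))
          = (∏ i : Fin r, (X (f i) : MvPolynomial (Fin n) (ZMod 2)) ^ (2 ^ (c + 1 + ↑i))) ^ 2 := by
        rw [← Finset.prod_pow]
        refine Finset.prod_congr rfl fun i _ => ?_
        rw [show c + 1 + 1 + (i : ℕ) = (c + 1 + (i : ℕ)) + 1 from by omega, pow_succ, pow_mul]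
      rw [hsq, Q_mul, Q_sq, mul_zero, add_zero, Q_prod_X, Finset.mul_sum]
      have hrange : ∀ j : Fin n, j ∈ (Finset.image f Finset.univ)ᶜ ↔ j ∉ Set.range f := by
        intro j; simp [Set.mem_range]
      have hcond : ∀ j : Fin n,
          (if Function.Injective (Fin.cons j f : Fin (r+1) → Fin n) then
            (∏ i : Fin (r+1), (X ((Fin.cons j f : Fin (r+1) → Fin n) i) : MvPolynomial (Fin n) (ZMod 2)) ^ (2 ^ (c + 1 + ↑i))) *
              ∏ k ∈ (Finset.image (Fin.cons j f : Fin (r+1) → Fin n) Finset.univ)ᶜ, X k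
          else 0)
          = if j ∈ (Finset.image f Finset.univ)ᶜ then
            (∏ i : Fin (r+1), (X ((Fin.cons j f : Fin (r+1) → Fin n) i) : MvPolynomial (Fin n) (ZMod 2)) ^ (2 ^ (c + 1 + ↑i))) *
              ∏ k ∈ (Finset.image (Fin.cons j f : Fin (r+1) → Fin n) Finset.univ)ᶜ, X k
          else 0 := by
        intro j
        congr 1
        simp only [Fin.cons_injective_iff, hrange, hf, and_true, eq_iff_iff]
      simp only [hcond]
      rw [Finset.sum_ite_mem, Finset.univ_inter]
      refine Finset.sum_congr rfl fun j hj => ?_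
      rw [image_cons_univ, Finset.compl_insert, Fin.prod_univ_succ]
      have hA : (∏ i : Fin r, (X ((Fin.cons j f : Fin (r+1) → Fin n) (Fin.succ i)) : MvPolynomial (Fin n) (ZMod 2)) ^ (2 ^ (c + 1 + ↑(Fin.succ i))))
          = (∏ i : Fin r, (X (f i) : MvPolynomial (Fin n) (ZMod 2)) ^ (2 ^ (c + 1 + ↑i))) ^ 2 := by
        rw [← Finset.prod_pow]
        refine Finset.prod_congr rfl fun i _ => ?_
        rw [Fin.cons_succ, ← pow_mul, ← pow_succ, Fin.val_succ]
        exact congrArg (fun e => (X (f i) : MvPolynomial (Fin n) (ZMod 2)) ^ e)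
          (congrArg (2 ^ ·) (by omega : c + 1 + ((i : ℕ) + 1) = c + 1 + (i : ℕ) + 1))
      rw [hA, Fin.cons_zero]
      simp only [Fin.val_zero, Nat.add_zero]
      ring
    · rw [if_neg hf]
      rw [map_zero]
      refine (Finset.sum_eq_zero fun j _ => ?_).symm
      rw [if_neg (fun h => hf (Fin.cons_injective_iff.mp h).2)]

lemma compl_image_succ {m : ℕ} (π : Equiv.Perm (Fin (m+1))) :
    (Finset.image (fun k : Fin m => π k.succ) Finset.univ)ᶜ = {π 0} := by
  ext j
  simp only [Finset.mem_compl, Finset.mem_image, Finset.mem_singleton, Finset.mem_univ,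
    true_and, not_exists]
  constructor
  · intro h
    obtain ⟨a, rfl⟩ := π.surjective j
    rcases Fin.eq_zero_or_eq_succ a with rfl | ⟨k, rfl⟩
    · rfl
    · exact absurd rfl (h k)
  · rintro rfl k h
    exact (Fin.succ_ne_zero k) (π.injective h)

/-- Moore permanent formula for `(Q_0 ∘ ⋯ ∘ Q_{n-2}) (x₁⋯x_n)`. -/
theorem milnor_composite_prod_eq_permanent (n : ℕ) (hn : 1 ≤ n) :
    ((List.ofFn fun k : Fin (n - 1) => Q (Fin n) (k : ℕ)).foldr (· ∘ₗ ·) LinearMap.id)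
        (∏ j : Fin n, X j) =
      ∑ π : Equiv.Perm (Fin n), ∏ i : Fin n, (X (π i) : MvPolynomial (Fin n) (ZMod 2)) ^ (2 ^ (i : ℕ)) := by
  obtain ⟨m, rfl⟩ : ∃ m, n = m + 1 := ⟨n - 1, by omega⟩
  have hl : (List.ofFn fun k : Fin (m + 1 - 1) => Q (Fin (m+1)) (k : ℕ))
      = List.ofFn fun k : Fin m => Q (Fin (m+1)) (0 + (k : ℕ)) := by
    simp only [Nat.zero_add]
    rfl
  rw [hl, main (m+1) 0 m]
  rw [← Finset.sum_filter]
  refine (Finset.sum_bij (fun (π : Equiv.Perm (Fin (m+1))) _ => fun k : Fin m => π k.succ)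
    ?_ ?_ ?_ ?_).symm
  · intro π _
    simp only [Finset.mem_filter, Finset.mem_univ, true_and]
    exact π.injective.comp (Fin.succ_injective m)
  · intro π₁ _ π₂ _ h
    have h' : (fun k : Fin m => π₁ k.succ) = fun k : Fin m => π₂ k.succ := h
    have h0 : π₁ 0 = π₂ 0 := by
      have himg := compl_image_succ π₁
      rw [h', compl_image_succ π₂] at himg
      exact (Finset.singleton_injective himg).symm
    refine Equiv.ext fun a => ?_
    rcases Fin.eq_zero_or_eq_succ a with rfl | ⟨k, rfl⟩
    · exact h0
    · exact congrFun h' k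
  · intro f hf
    simp only [Finset.mem_filter, Finset.mem_univ, true_and] at hf
    have hcard : ((Finset.image f Finset.univ)ᶜ : Finset (Fin (m+1))).card = 1 := by
      rw [Finset.card_compl, Finset.card_image_of_injective _ hf]
      simp
    obtain ⟨a, ha⟩ := Finset.card_eq_one.mp hcard
    have haf : a ∉ Set.range f := by
      have : a ∈ (Finset.image f Finset.univ)ᶜ := by rw [ha]; exact Finset.mem_singleton_self a
      simp only [Finset.mem_compl, Finset.mem_image, Finset.mem_univ, true_and, not_exists] at this
      rintro ⟨k, rfl⟩
      exact this k rfl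
    have hg : Function.Injective (Fin.cons a f : Fin (m+1) → Fin (m+1)) :=
      Fin.cons_injective_iff.mpr ⟨haf, hf⟩
    refine ⟨Equiv.ofBijective _ (Finite.injective_iff_bijective.mp hg), Finset.mem_univ _, ?_⟩
    funext k
    exact @Fin.cons_succ m (fun _ => Fin (m+1)) a f k
  · intro π _
    rw [Fin.prod_univ_succ, compl_image_succ, Finset.prod_singleton]
    have : (∏ i : Fin m, (X (π i.succ) : MvPolynomial (Fin (m+1)) (ZMod 2)) ^ (2 ^ (↑(Fin.succ i) : ℕ)))
        = ∏ i : Fin m, (X (π i.succ) : MvPolynomial (Fin (m+1)) (ZMod 2)) ^ (2 ^ (0 + 1 + (i : ℕ))) := by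
      refine Finset.prod_congr rfl fun i _ => ?_
      exact congrArg (fun e => (X (π i.succ) : MvPolynomial (Fin (m+1)) (ZMod 2)) ^ e)
        (congrArg (2 ^ ·) (by rw [Fin.val_succ]; omega))
    rw [this]
    simp only [Fin.val_zero, pow_zero, pow_one]
    ring
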